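/- arXiv:2306.07701 — 2 statements merged into one kernel-verified Lean document; each statement's English description precedes it below -/
import Mathlib

section
/- Let ψ : (0,∞) → [0,∞) be measurable with 0 < ∫₀^{∞} ψ(x)dx = ∫₀^{∞} x ψ(x)dx < ∞ and assume lim_{τ→0⁺} τ ∫_{1/τ}^{∞} xⁿ ψ(x)dx = 0 for every integer n ≥ 2. For τ > 0 define D_*(μ,τ) = ψ((1−μ)/(2τ)) · [4πτ ∫₀^{1/τ} ψ(x)dx]^{−1} on [−1,1]. Then the probability measures on [−1,1] with density μ ↦ 2π D_*(μ,τ) (with respect to Lebesgue measure) converge weakly to the Dirac measure δ₁ as τ → 0⁺. -/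
open MeasureTheory Filter Topology

/-- Key dominated-convergence step: for any bounded continuous `g`,
`∫₀^{1/τ} ψ(x) g(1-2τx) dx → (∫₀^∞ ψ) · g(1)` as `τ → 0⁺`. -/
lemma aux_tendsto_Dstar (ψ : ℝ → ℝ) (hmeas : Measurable ψ)
    (hint1 : IntegrableOn ψ (Set.Ioi 0)) (g : BoundedContinuousFunction ℝ ℝ) :
    Tendsto (fun τ : ℝ => ∫ x in Set.Ioc (0:ℝ) (1/τ), ψ x * g (1 - 2*τ*x)) (𝓝[>] (0:ℝ))
      (𝓝 (∫ x in Set.Ioi (0:ℝ), ψ x * g 1)) := by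
  have hrw : ∀ τ : ℝ, (∫ x in Set.Ioc (0:ℝ) (1/τ), ψ x * g (1 - 2*τ*x))
      = ∫ x in Set.Ioi (0:ℝ), (Set.Iic (1/τ)).indicator (fun x => ψ x * g (1 - 2*τ*x)) x := by
    intro τ
    rw [setIntegral_indicator measurableSet_Iic, Set.Ioi_inter_Iic]
  simp only [hrw]
  apply tendsto_integral_filter_of_dominated_convergence (fun x => |ψ x| * ‖g‖)
  · filter_upwards with τ
    exact ((hmeas.mul (g.continuous.measurable.comp
      (by fun_prop : Measurable fun x : ℝ => 1 - 2*τ*x))).indicator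
      measurableSet_Iic).aestronglyMeasurable
  · filter_upwards with τ
    filter_upwards with x
    calc ‖(Set.Iic (1/τ)).indicator (fun x => ψ x * g (1 - 2*τ*x)) x‖
        ≤ ‖ψ x * g (1 - 2*τ*x)‖ := norm_indicator_le_norm_self _ _
      _ = |ψ x| * ‖g (1 - 2*τ*x)‖ := by rw [norm_mul, Real.norm_eq_abs]
      _ ≤ |ψ x| * ‖g‖ := by gcongr; exact g.norm_coe_le_norm _
  · exact hint1.norm.mul_const _
  · filter_upwards [self_mem_ae_restrict measurableSet_Ioi] with x hx
    have hx' : (0:ℝ) < x := hx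
    have hev : ∀ᶠ τ in 𝓝[>] (0:ℝ),
        ψ x * g (1 - 2*τ*x)
          = (Set.Iic (1/τ)).indicator (fun x => ψ x * g (1 - 2*τ*x)) x := by
      have hmem : Set.Ioo (0:ℝ) (1/x) ∈ 𝓝[>] (0:ℝ) :=
        Ioo_mem_nhdsGT_of_mem ⟨le_refl 0, by positivity⟩
      filter_upwards [hmem] with τ hτ
      have hτx : τ * x < 1 := (lt_div_iff₀ hx').1 hτ.2
      have hx1 : x ∈ Set.Iic (1/τ) := by
        rw [Set.mem_Iic, le_div_iff₀ hτ.1]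
        nlinarith
      exact (Set.indicator_of_mem hx1 (fun y => ψ y * g (1 - 2*τ*y))).symm
    refine Tendsto.congr' hev ?_
    have hc : Tendsto (fun τ : ℝ => ψ x * g (1 - 2*τ*x)) (𝓝 (0:ℝ))
        (𝓝 (ψ x * g (1 - 2*0*x))) :=
      (continuous_const.mul (g.continuous.comp (by continuity))).continuousAt
    simpa using hc.mono_left nhdsWithin_le_nhds

/-- The probability measures on `[-1,1]` with density `μ ↦ 2π D_*(μ,τ)`, where
`D_*(μ,τ) = ψ((1-μ)/(2τ)) / (4πτ ∫₀^{1/τ} ψ)`, converge weakly to the Dirac measure `δ₁`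
as `τ → 0⁺`. -/
theorem Dstar_weak_convergence_to_dirac (ψ : ℝ → ℝ) (hmeas : Measurable ψ)
    (hpos : ∀ x : ℝ, 0 ≤ x → 0 ≤ ψ x)
    (hint1 : IntegrableOn ψ (Set.Ioi 0))
    (hint2 : IntegrableOn (fun x => x * ψ x) (Set.Ioi 0))
    (hIpos : 0 < ∫ x in Set.Ioi (0 : ℝ), ψ x)
    (heq : ∫ x in Set.Ioi (0 : ℝ), ψ x = ∫ x in Set.Ioi (0 : ℝ), x * ψ x)
    (htail : ∀ n : ℕ, 2 ≤ n →
      Tendsto (fun τ : ℝ => τ * ∫ x in Set.Ioi (1 / τ), x ^ n * ψ x) (𝓝[>] (0 : ℝ)) (𝓝 0)) :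
    ∀ g : BoundedContinuousFunction ℝ ℝ,
      Tendsto (fun τ : ℝ => ∫ μ in Set.Icc (-1 : ℝ) 1,
          2 * Real.pi * (ψ ((1 - μ) / (2 * τ)) *
            (4 * Real.pi * τ * ∫ x in Set.Ioc (0 : ℝ) (1 / τ), ψ x)⁻¹) * g μ)
        (𝓝[>] (0 : ℝ)) (𝓝 (g 1)) := by
  intro g
  have hD : Tendsto (fun τ : ℝ => ∫ x in Set.Ioc (0:ℝ) (1/τ), ψ x) (𝓝[>] (0:ℝ))
      (𝓝 (∫ x in Set.Ioi (0:ℝ), ψ x)) := by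
    have := aux_tendsto_Dstar ψ hmeas hint1 (BoundedContinuousFunction.const ℝ (1:ℝ))
    simpa using this
  have hN := aux_tendsto_Dstar ψ hmeas hint1 g
  have hNI : (∫ x in Set.Ioi (0:ℝ), ψ x * g 1) = (∫ x in Set.Ioi (0:ℝ), ψ x) * g 1 :=
    integral_mul_const _ _
  have hdiv : Tendsto (fun τ : ℝ =>
      (∫ x in Set.Ioc (0:ℝ) (1/τ), ψ x * g (1 - 2*τ*x)) / (∫ x in Set.Ioc (0:ℝ) (1/τ), ψ x))
      (𝓝[>] (0:ℝ)) (𝓝 (g 1)) := by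
    have h := hN.div hD (ne_of_gt hIpos)
    rw [hNI, mul_div_cancel_left₀ _ (ne_of_gt hIpos)] at h
    exact h
  refine Tendsto.congr' ?_ hdiv
  filter_upwards [self_mem_nhdsWithin, hD.eventually (eventually_gt_nhds hIpos)] with τ hτ hDτ
  have hτ0 : (0:ℝ) < τ := hτ
  set D := ∫ x in Set.Ioc (0:ℝ) (1/τ), ψ x with hDdef
  set c : ℝ := (4 * Real.pi * τ * D)⁻¹ with hc
  set f : ℝ → ℝ := fun μ => 2 * Real.pi * (ψ ((1 - μ)/(2*τ)) * c) * g μ with hf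
  have h1 : (∫ μ in Set.Icc (-1:ℝ) 1, f μ) = ∫ μ in (-1:ℝ)..1, f μ := by
    rw [intervalIntegral.integral_of_le (by norm_num : (-1:ℝ) ≤ 1),
      integral_Icc_eq_integral_Ioc]
  have h2 := intervalIntegral.integral_comp_mul_add (a := (0:ℝ)) (b := 1/τ)
      (f := f) (c := -(2*τ)) (neg_ne_zero.2 (by positivity)) 1
  have he1 : -(2*τ) * 0 + 1 = (1:ℝ) := by ring
  have he2 : -(2*τ) * (1/τ) + 1 = (-1:ℝ) := by
    field_simp
    ring
  rw [he1, he2] at h2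
  have h3 : ∀ x : ℝ, f (-(2*τ) * x + 1) = (2 * Real.pi * c) * (ψ x * g (1 - 2*τ*x)) := by
    intro x
    have harg : -(2*τ) * x + 1 = 1 - 2*τ*x := by ring
    have hval : (1 - (1 - 2*τ*x)) / (2*τ) = x := by field_simp; ring
    rw [hf]
    simp only [harg, hval]
    ring
  have h4 : (∫ x in (0:ℝ)..(1/τ), f (-(2*τ) * x + 1))
      = (2 * Real.pi * c) * ∫ x in Set.Ioc (0:ℝ) (1/τ), ψ x * g (1 - 2*τ*x) := by
    simp only [h3]
    rw [intervalIntegral.integral_const_mul,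
      intervalIntegral.integral_of_le (by positivity : (0:ℝ) ≤ 1/τ)]
  rw [h4] at h2
  have h5 : (∫ μ in (1:ℝ)..(-1:ℝ), f μ) = -(∫ μ in (-1:ℝ)..1, f μ) :=
    intervalIntegral.integral_symm _ _
  rw [h5, smul_eq_mul] at h2
  -- h2 : (2πc) * N = (-(2τ))⁻¹ * -(∫_{-1}^{1} f)
  have h6 : (∫ μ in (-1:ℝ)..1, f μ)
      = 2*τ * ((2 * Real.pi * c) * ∫ x in Set.Ioc (0:ℝ) (1/τ), ψ x * g (1 - 2*τ*x)) := by
    rw [h2]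
    field_simp
  rw [h1, h6, hc]
  have hπ := Real.pi_ne_zero
  field_simp
  ring
end

section
/- Let ψ : (0,∞) → [0,∞) be measurable with 0 < ∫₀^{∞} ψ(x)dx = ∫₀^{∞} x ψ(x)dx < ∞ and assume lim_{τ→0⁺} τ ∫_{1/τ}^{∞} xⁿ ψ(x)dx = 0 for every integer n ≥ 2. For τ > 0 define D_*(μ,τ) = ψ((1−μ)/(2τ)) · [4πτ ∫₀^{1/τ} ψ(x)dx]^{−1} on [−1,1]. Then for every integer l ≥ 1, lim_{τ→0⁺} (2π/τ) ∫_{−1}^{1} D_*(μ,τ)(1 − P_l(μ)) dμ = l(l+1). -/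
set_option maxHeartbeats 1000000

open MeasureTheory Filter Topology Polynomial Finset


/-- The Legendre polynomial of degree `l`, via Rodrigues' formula. -/
noncomputable def legendreP (l : ℕ) (x : ℝ) : ℝ :=
  (1 / (2 ^ l * (Nat.factorial l : ℝ))) * iteratedDeriv l (fun y : ℝ => (y ^ 2 - 1) ^ l) x

lemma iteratedDeriv_poly (n : ℕ) (p : ℝ[X]) (x : ℝ) :
    iteratedDeriv n (fun y : ℝ => p.eval y) x = (derivative^[n] p).eval x := by
  induction n generalizing p with
  | zero => simp
  | succ n ih =>
    rw [iteratedDeriv_succ', Function.iterate_succ_apply]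
    rw [← ih p.derivative]
    congr 1
    funext y
    simp [Polynomial.deriv]

lemma legendreP_explicit (l : ℕ) (x : ℝ) :
    legendreP l x = ∑ k ∈ range (l + 1),
      (l.choose k : ℝ) ^ 2 * ((x - 1) / 2) ^ k * ((x + 1) / 2) ^ (l - k) := by
  have hp : (fun y : ℝ => (y ^ 2 - 1) ^ l) =
      fun y : ℝ => (((X - C 1) ^ l * (X + C 1) ^ l : ℝ[X])).eval y := by
    funext y; simp [← mul_pow]; ring_nf
  rw [legendreP, hp, iteratedDeriv_poly, iterate_derivative_mul]
  simp only [iterate_derivative_X_sub_pow, iterate_derivative_X_add_pow, eval_finset_sum,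
    eval_smul, smul_eq_mul, eval_mul, eval_pow, eval_sub, eval_add, eval_X, eval_one, eval_C]
  rw [Finset.mul_sum]
  refine Finset.sum_congr rfl fun k hk => ?_
  have hkl : k ≤ l := Nat.lt_succ_iff.mp (Finset.mem_range.mp hk)
  have h1 : l - (l - k) = k := Nat.sub_sub_self hkl
  rw [h1]
  have hcoeff : (l.choose k) * (l.descFactorial (l - k)) * (l.descFactorial k)
      = l.choose k ^ 2 * l.factorial := by
    rw [Nat.descFactorial_eq_factorial_mul_choose, Nat.descFactorial_eq_factorial_mul_choose,
      Nat.choose_symm hkl]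
    have := Nat.choose_mul_factorial_mul_factorial hkl
    nlinarith [this]
  have h2 : ((l.choose k : ℝ)) * (l.descFactorial (l - k)) * (l.descFactorial k)
      = (l.choose k : ℝ) ^ 2 * l.factorial := by exact_mod_cast congrArg (Nat.cast (R := ℝ)) hcoeff
  have hfac : (l.factorial : ℝ) ≠ 0 := Nat.cast_ne_zero.mpr l.factorial_ne_zero
  have key : ((x-1)/2)^k * ((x+1)/2)^(l-k) = (x-1)^k * (x+1)^(l-k) / 2^l := by
    rw [div_pow, div_pow, div_mul_div_comm, ← pow_add, Nat.add_sub_cancel' hkl]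
  rw [mul_assoc ((l.choose k:ℝ)^2), key]
  have h2pow : ((2:ℝ) ^ l) ≠ 0 := by positivity
  field_simp
  linear_combination ((x-1)^k * (x+1)^(l-k)) * h2

lemma pow_taylor (t : ℝ) (ht0 : 0 ≤ t) (ht1 : t ≤ 1) (n : ℕ) :
    |1 - (1-t)^n - n*t| ≤ (n:ℝ)^2 * t^2 := by
  induction n with
  | zero => simp
  | succ n ih =>
    have hb : 1 - (n:ℝ)*t ≤ (1-t)^n := by
      have := one_add_mul_le_pow (a := -t) (by linarith) n
      calc 1 - (n:ℝ)*t = 1 + (n:ℝ)*(-t) := by ring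
        _ ≤ (1 + -t)^n := this
        _ = (1-t)^n := by ring_nf
    have hb1 : (1-t)^n ≤ 1 := pow_le_one₀ (by linarith) (by linarith)
    have key : 1 - (1-t)^(n+1) - ((n:ℕ):ℝ)*t - t = (1 - (1-t)^n - n*t) + t*((1-t)^n - 1) + ((n:ℝ)*t - ((n:ℝ)+1)*t + t) - ((1-t)^(n+1) - (1-t)^n + t*(1-t)^n) := by ring
    have habs2 : |t*((1-t)^n - 1)| ≤ (n:ℝ)*t^2 := by
      rw [abs_mul, abs_of_nonneg ht0, abs_of_nonpos (by linarith)]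
      calc t * -((1-t)^n - 1) = t * (1 - (1-t)^n) := by ring
        _ ≤ t * ((n:ℝ)*t) := by nlinarith
        _ = (n:ℝ)*t^2 := by ring
    have expand : 1 - (1-t)^(n+1) - ((n:ℝ)+1)*t = (1 - (1-t)^n - n*t) + t*((1-t)^n - 1) := by ring
    push_cast
    rw [expand]
    calc |(1 - (1-t)^n - n*t) + t*((1-t)^n - 1)| ≤ |1 - (1-t)^n - n*t| + |t*((1-t)^n - 1)| := abs_add_le _ _
      _ ≤ (n:ℝ)^2*t^2 + (n:ℝ)*t^2 := add_le_add ih habs2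
      _ ≤ ((n:ℝ)+1)^2*t^2 := by nlinarith [sq_nonneg t]

noncomputable def Kc (l : ℕ) : ℝ :=
  (l:ℝ)^2 + (l:ℝ)^3 + ∑ k ∈ Finset.range (l+1), ((l.choose k : ℝ))^2

lemma Kc_nonneg (l : ℕ) : 0 ≤ Kc l := by
  unfold Kc
  have : (0:ℝ) ≤ ∑ k ∈ Finset.range (l+1), ((l.choose k : ℝ))^2 :=
    Finset.sum_nonneg fun k _ => sq_nonneg _
  positivity

lemma legendreP_est (l : ℕ) (hl : 1 ≤ l) (t : ℝ) (ht0 : 0 ≤ t) (ht1 : t ≤ 1) :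
    |1 - legendreP l (1 - 2*t) - (l:ℝ)*((l:ℝ)+1)*t| ≤ Kc l * t^2 := by
  obtain ⟨m, rfl⟩ : ∃ m, l = m + 1 := ⟨l - 1, (Nat.succ_pred_eq_of_pos hl).symm⟩
  rw [legendreP_explicit]
  have e1 : (1 - 2*t - 1)/2 = -t := by ring
  have e2 : (1 - 2*t + 1)/2 = 1 - t := by ring
  rw [e1, e2, Finset.sum_range_succ', Finset.sum_range_succ']
  have hch1 : ((m+1).choose 1 : ℝ) = (m:ℝ) + 1 := by
    rw [Nat.choose_one_right]; push_cast; ring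
  have hch0 : ((m+1).choose 0 : ℝ) = 1 := by simp
  -- the three pieces
  set S2 : ℝ := ∑ k ∈ range m, ((m+1).choose (k+2) : ℝ)^2 * (-t)^(k+2) * (1-t)^(m+1-(k+2)) with hS2
  have hb1 : (1-t)^m ≤ 1 := pow_le_one₀ (by linarith) (by linarith)
  have hbern : 1 - (m:ℝ)*t ≤ (1-t)^m := by
    have := one_add_mul_le_pow (a := -t) (by linarith) m
    calc 1 - (m:ℝ)*t = 1 + (m:ℝ)*(-t) := by ring
      _ ≤ (1 + -t)^m := this
      _ = (1-t)^m := by ring_nf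
  have hA : |1 - (1-t)^(m+1) - ((m:ℝ)+1)*t| ≤ ((m:ℝ)+1)^2 * t^2 := by
    have := pow_taylor t ht0 ht1 (m+1)
    push_cast at this
    exact this
  have hB : |((m:ℝ)+1)^2 * t * ((1-t)^m - 1)| ≤ ((m:ℝ)+1)^2 * (m:ℝ) * t^2 := by
    rw [abs_mul, abs_of_nonneg (by positivity : (0:ℝ) ≤ ((m:ℝ)+1)^2 * t),
      abs_of_nonpos (by linarith)]
    have h1 : -((1-t)^m - 1) ≤ (m:ℝ)*t := by linarith
    calc ((m:ℝ)+1)^2 * t * -((1-t)^m - 1) ≤ ((m:ℝ)+1)^2 * t * ((m:ℝ)*t) := by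
          apply mul_le_mul_of_nonneg_left h1 (by positivity)
      _ = ((m:ℝ)+1)^2 * (m:ℝ) * t^2 := by ring
  have hS2bound : |S2| ≤ (∑ k ∈ range (m+2), (((m+1).choose k : ℝ))^2) * t^2 := by
    calc |S2| ≤ ∑ k ∈ range m, |((m+1).choose (k+2) : ℝ)^2 * (-t)^(k+2) * (1-t)^(m+1-(k+2))| :=
        Finset.abs_sum_le_sum_abs _ _
      _ ≤ ∑ k ∈ range m, (((m+1).choose (k+2) : ℝ))^2 * t^2 := by
        refine Finset.sum_le_sum fun k _ => ?_
        rw [abs_mul, abs_mul, abs_pow, abs_pow, abs_pow, abs_neg, abs_of_nonneg ht0,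
          abs_of_nonneg (by linarith : (0:ℝ) ≤ 1 - t),
          abs_of_nonneg (Nat.cast_nonneg _)]
        have h1 : t^(k+2) ≤ t^2 := by
          calc t^(k+2) = t^2 * t^k := by ring
            _ ≤ t^2 * 1 := by
              have := pow_le_one₀ ht0 ht1 (n := k)
              nlinarith [sq_nonneg t]
            _ = t^2 := by ring
        have h2 : (1-t)^(m+1-(k+2)) ≤ 1 := pow_le_one₀ (by linarith) (by linarith)
        calc (((m+1).choose (k+2):ℝ))^2 * t^(k+2) * (1-t)^(m+1-(k+2))
            ≤ (((m+1).choose (k+2):ℝ))^2 * t^(k+2) * 1 :=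
              mul_le_mul_of_nonneg_left h2 (mul_nonneg (sq_nonneg _) (pow_nonneg ht0 _))
          _ = (((m+1).choose (k+2):ℝ))^2 * t^(k+2) := mul_one _
          _ ≤ (((m+1).choose (k+2):ℝ))^2 * t^2 := mul_le_mul_of_nonneg_left h1 (sq_nonneg _)
      _ ≤ (∑ k ∈ range (m+2), (((m+1).choose k : ℝ))^2) * t^2 := by
        rw [Finset.sum_mul]
        rw [Finset.sum_range_succ' (fun k => (((m+1).choose k : ℝ))^2 * t^2),
          Finset.sum_range_succ' (fun k => (((m+1).choose (k+1) : ℝ))^2 * t^2)]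
        have : ∀ k ∈ range m, (((m+1).choose (k+2) : ℝ))^2 * t^2 = (((m+1).choose (k+1+1) : ℝ))^2 * t^2 := by
          intro k _; norm_num
        rw [Finset.sum_congr rfl this]
        nlinarith [sq_nonneg (((m+1).choose 1 : ℝ)) , sq_nonneg (((m+1).choose 0 : ℝ)), sq_nonneg t,
          mul_nonneg (sq_nonneg (((m+1).choose 1 : ℝ))) (sq_nonneg t),
          mul_nonneg (sq_nonneg (((m+1).choose 0 : ℝ))) (sq_nonneg t)]
  -- combine
  have main : 1 - (S2 + ((m+1).choose 1 : ℝ)^2 * (-t)^1 * (1-t)^(m+1-1) + ((m+1).choose 0 : ℝ)^2 * (-t)^0 * (1-t)^(m+1-0)) - ((m+1:ℕ):ℝ)*(((m+1:ℕ):ℝ)+1)*t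
      = (1 - (1-t)^(m+1) - ((m:ℝ)+1)*t) + (((m:ℝ)+1)^2 * t * ((1-t)^m - 1)) + (-S2) := by
    rw [hch1, hch0]
    push_cast
    ring
  calc |1 - (S2 + ((m+1).choose 1 : ℝ)^2 * (-t)^1 * (1-t)^(m+1-1) + ((m+1).choose 0 : ℝ)^2 * (-t)^0 * (1-t)^(m+1-0)) - ((m+1:ℕ):ℝ)*(((m+1:ℕ):ℝ)+1)*t|
      = |(1 - (1-t)^(m+1) - ((m:ℝ)+1)*t) + (((m:ℝ)+1)^2 * t * ((1-t)^m - 1)) + (-S2)| := by rw [main]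
    _ ≤ |1 - (1-t)^(m+1) - ((m:ℝ)+1)*t| + |(((m:ℝ)+1)^2 * t * ((1-t)^m - 1))| + |(-S2)| := abs_add_three _ _ _
    _ ≤ ((m:ℝ)+1)^2*t^2 + ((m:ℝ)+1)^2*(m:ℝ)*t^2 + (∑ k ∈ range (m+2), (((m+1).choose k : ℝ))^2) * t^2 := by
        rw [abs_neg]; exact add_le_add (add_le_add hA hB) hS2bound
    _ ≤ Kc (m+1) * t^2 := by
        unfold Kc
        push_cast
        nlinarith [sq_nonneg t, Nat.cast_nonneg (α := ℝ) m, sq_nonneg ((m:ℝ)+1), mul_nonneg (Nat.cast_nonneg (α := ℝ) m) (sq_nonneg t)]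

lemma continuous_legendreP (l : ℕ) : Continuous (legendreP l) := by
  have : legendreP l = fun x => ∑ k ∈ range (l + 1),
      (l.choose k : ℝ) ^ 2 * ((x - 1) / 2) ^ k * ((x + 1) / 2) ^ (l - k) :=
    funext (legendreP_explicit l)
  rw [this]
  apply continuous_finset_sum
  intro k _
  fun_prop

/-- For the general approximated grazing-collision kernel `D_*(μ,τ)` built from `ψ` and every
integer `l ≥ 1`, `(2π/τ) ∫_{-1}^{1} D_*(μ,τ)(1 - P_l(μ)) dμ → l(l+1)` as `τ → 0⁺`. -/
theorem Dstar_grazing_consistency (ψ : ℝ → ℝ) (hmeas : Measurable ψ)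
    (hpos : ∀ x : ℝ, 0 ≤ x → 0 ≤ ψ x)
    (hint1 : IntegrableOn ψ (Set.Ioi 0))
    (hint2 : IntegrableOn (fun x => x * ψ x) (Set.Ioi 0))
    (hIpos : 0 < ∫ x in Set.Ioi (0 : ℝ), ψ x)
    (heq : ∫ x in Set.Ioi (0 : ℝ), ψ x = ∫ x in Set.Ioi (0 : ℝ), x * ψ x)
    (htail : ∀ n : ℕ, 2 ≤ n →
      Tendsto (fun τ : ℝ => τ * ∫ x in Set.Ioi (1 / τ), x ^ n * ψ x) (𝓝[>] (0 : ℝ)) (𝓝 0))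
    (l : ℕ) (hl : 1 ≤ l) :
    Tendsto (fun τ : ℝ => (2 * Real.pi / τ) *
        ∫ μ in Set.Icc (-1 : ℝ) 1,
          (ψ ((1 - μ) / (2 * τ)) *
            (4 * Real.pi * τ * ∫ x in Set.Ioc (0 : ℝ) (1 / τ), ψ x)⁻¹) * (1 - legendreP l μ))
      (𝓝[>] (0 : ℝ)) (𝓝 ((l : ℝ) * ((l : ℝ) + 1))) := by
  set A : ℝ := ∫ x in Set.Ioi (0 : ℝ), ψ x with hA
  set I : ℝ → ℝ := fun τ => ∫ x in Set.Ioc (0:ℝ) (1/τ), ψ x with hIdef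
  set J : ℝ → ℝ := fun τ => ∫ x in Set.Ioc (0:ℝ) (1/τ), x * ψ x with hJdef
  set E : ℝ → ℝ := fun τ => ∫ x in Set.Ioc (0:ℝ) (1/τ), x^2 * ψ x with hEdef
  set cl : ℝ := (l:ℝ) * ((l:ℝ) + 1) with hcl
  -- basic limits
  have hinvtop : Tendsto (fun τ : ℝ => 1/τ) (𝓝[>] (0:ℝ)) atTop := by
    simpa only [one_div] using tendsto_inv_nhdsGT_zero
  have hItend : Tendsto I (𝓝[>] (0:ℝ)) (𝓝 A) := by
    have h0 := intervalIntegral_tendsto_integral_Ioi (0:ℝ) hint1 hinvtop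
    refine h0.congr' ?_
    filter_upwards [self_mem_nhdsWithin] with τ hτ
    rw [intervalIntegral.integral_of_le (one_div_pos.mpr (Set.mem_Ioi.mp hτ)).le]
  have hJtend : Tendsto J (𝓝[>] (0:ℝ)) (𝓝 A) := by
    rw [heq]
    have h0 := intervalIntegral_tendsto_integral_Ioi (0:ℝ) hint2 hinvtop
    refine h0.congr' ?_
    filter_upwards [self_mem_nhdsWithin] with τ hτ
    rw [intervalIntegral.integral_of_le (one_div_pos.mpr (Set.mem_Ioi.mp hτ)).le]
  -- integrability on Ioc 0 (1/τ) for τ > 0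
  have hψIoc : ∀ b : ℝ, IntegrableOn ψ (Set.Ioc 0 b) := fun b =>
    hint1.mono_set Set.Ioc_subset_Ioi_self
  have hxψIoc : ∀ b : ℝ, IntegrableOn (fun x => x * ψ x) (Set.Ioc 0 b) := fun b =>
    hint2.mono_set Set.Ioc_subset_Ioi_self
  have hx2ψmeas : Measurable (fun x : ℝ => x^2 * ψ x) :=
    (measurable_id.pow_const 2).mul hmeas
  have hx2ψIoc : ∀ b : ℝ, 0 < b → IntegrableOn (fun x => x^2 * ψ x) (Set.Ioc 0 b) := by
    intro b hb
    refine Integrable.mono' ((hxψIoc b).const_mul b) hx2ψmeas.aestronglyMeasurable.restrict ?_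
    rw [ae_restrict_iff' measurableSet_Ioc]
    filter_upwards with x hx
    have hx0 : 0 < x := hx.1
    have hxb : x ≤ b := hx.2
    have hψx : 0 ≤ ψ x := hpos x hx0.le
    rw [Real.norm_eq_abs, abs_of_nonneg (by positivity)]
    nlinarith [mul_le_mul_of_nonneg_right hxb (mul_nonneg hx0.le hψx)]
  -- pointwise estimates
  have hest : ∀ τ : ℝ, 0 < τ → ∀ u ∈ Set.Ioc (0:ℝ) (1/τ),
      |1 - legendreP l (1 - 2*(τ*u)) - cl*(τ*u)| ≤ Kc l * (τ*u)^2 := by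
    intro τ hτ u hu
    have h1 : 0 ≤ τ*u := mul_nonneg hτ.le hu.1.le
    have h2 : τ*u ≤ 1 := by
      have h3 := hu.2
      rw [le_div_iff₀ hτ] at h3
      linarith [h3, mul_comm τ u]
    have h4 := legendreP_est l hl (τ*u) h1 h2
    rw [hcl]
    exact h4
  -- integrability of the substituted integrand
  have hcont : ∀ τ : ℝ, Continuous (fun u : ℝ => 1 - legendreP l (1 - 2*(τ*u))) := by
    intro τ
    exact continuous_const.sub ((continuous_legendreP l).comp (by fun_prop))
  have hHint : ∀ τ : ℝ, 0 < τ →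
      IntegrableOn (fun u => ψ u * (1 - legendreP l (1 - 2*(τ*u)))) (Set.Ioc 0 (1/τ)) := by
    intro τ hτ
    have hclnn : 0 ≤ cl := by rw [hcl]; positivity
    refine Integrable.mono' ((hψIoc (1/τ)).const_mul (cl + Kc l))
      ((hmeas.mul (hcont τ).measurable).aestronglyMeasurable.restrict) ?_
    rw [ae_restrict_iff' measurableSet_Ioc]
    filter_upwards with u hu
    have hb := hest τ hτ u hu
    have hψu := hpos u hu.1.le
    have htu0 : 0 ≤ τ*u := mul_nonneg hτ.le hu.1.le
    have htu1 : τ*u ≤ 1 := by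
      have h3 := hu.2
      rw [le_div_iff₀ hτ] at h3
      linarith [h3, mul_comm τ u]
    have habs : |1 - legendreP l (1 - 2*(τ*u))| ≤ cl + Kc l := by
      have h5 : |1 - legendreP l (1 - 2*(τ*u))| ≤ |1 - legendreP l (1 - 2*(τ*u)) - cl*(τ*u)| + |cl*(τ*u)| := by
        have := abs_add_le (1 - legendreP l (1 - 2*(τ*u)) - cl*(τ*u)) (cl*(τ*u))
        simpa using this
      have h6 : |cl*(τ*u)| ≤ cl := by
        rw [abs_of_nonneg (mul_nonneg hclnn htu0)]
        nlinarith
      have h7 : Kc l * (τ*u)^2 ≤ Kc l := by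
        have h8 : (τ*u)^2 ≤ 1 := by nlinarith
        nlinarith [Kc_nonneg l]
      linarith [hb]
    rw [Real.norm_eq_abs, abs_mul, abs_of_nonneg hψu]
    calc ψ u * |1 - legendreP l (1 - 2*(τ*u))| ≤ ψ u * (cl + Kc l) :=
        mul_le_mul_of_nonneg_left habs hψu
      _ = (cl + Kc l) * ψ u := mul_comm _ _
  -- key decomposition bound
  have hkey : ∀ τ : ℝ, 0 < τ →
      |(∫ u in Set.Ioc (0:ℝ) (1/τ), ψ u * (1 - legendreP l (1 - 2*(τ*u)))) - cl * τ * J τ|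
        ≤ Kc l * τ^2 * E τ := by
    intro τ hτ
    have h1τ : 0 < 1/τ := one_div_pos.mpr hτ
    have heq1 : cl * τ * J τ = ∫ u in Set.Ioc (0:ℝ) (1/τ), (cl*τ) * (u * ψ u) := by
      rw [integral_const_mul]
    rw [heq1, ← integral_sub (hHint τ hτ) ((hxψIoc (1/τ)).const_mul _)]
    have hbd : ∀ᵐ u ∂(volume.restrict (Set.Ioc (0:ℝ) (1/τ))),
        ‖ψ u * (1 - legendreP l (1 - 2*(τ*u))) - (cl*τ) * (u * ψ u)‖ ≤ Kc l * τ^2 * (u^2 * ψ u) := by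
      rw [ae_restrict_iff' measurableSet_Ioc]
      filter_upwards with u hu
      have hb := hest τ hτ u hu
      have hψu := hpos u hu.1.le
      have hre : ψ u * (1 - legendreP l (1 - 2*(τ*u))) - (cl*τ) * (u * ψ u)
          = ψ u * ((1 - legendreP l (1 - 2*(τ*u))) - cl*(τ*u)) := by ring
      rw [hre, Real.norm_eq_abs, abs_mul, abs_of_nonneg hψu]
      calc ψ u * |1 - legendreP l (1 - 2*(τ*u)) - cl*(τ*u)| ≤ ψ u * (Kc l * (τ*u)^2) :=
          mul_le_mul_of_nonneg_left hb hψu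
        _ = Kc l * τ^2 * (u^2 * ψ u) := by ring
    have hnorm := norm_integral_le_of_norm_le ((hx2ψIoc (1/τ) h1τ).const_mul (Kc l * τ^2)) hbd
    rw [Real.norm_eq_abs] at hnorm
    calc |∫ u in Set.Ioc (0:ℝ) (1/τ), (ψ u * (1 - legendreP l (1 - 2*(τ*u))) - (cl*τ) * (u * ψ u))|
        ≤ ∫ u in Set.Ioc (0:ℝ) (1/τ), Kc l * τ^2 * (u^2 * ψ u) := hnorm
      _ = Kc l * τ^2 * E τ := by rw [integral_const_mul, hEdef]
  -- tail: τ * E τ → 0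
  have hTtend : Tendsto (fun a : ℝ => ∫ x in Set.Ioi a, x * ψ x) atTop (𝓝 0) := by
    have h2 : Tendsto (fun a : ℝ => ∫ x in Set.Ioc 0 a, x * ψ x) atTop
        (𝓝 (∫ x in Set.Ioi (0:ℝ), x * ψ x)) := by
      have h0 := intervalIntegral_tendsto_integral_Ioi (0:ℝ) hint2 (tendsto_id (α := ℝ))
      refine h0.congr' ?_
      filter_upwards [eventually_ge_atTop (0:ℝ)] with a ha
      simp only [id_eq]
      rw [intervalIntegral.integral_of_le ha]
    have h3 : Tendsto (fun a : ℝ => (∫ x in Set.Ioi (0:ℝ), x * ψ x)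
        - ∫ x in Set.Ioc (0:ℝ) a, x * ψ x) atTop
        (𝓝 ((∫ x in Set.Ioi (0:ℝ), x * ψ x) - ∫ x in Set.Ioi (0:ℝ), x * ψ x)) :=
      Tendsto.sub tendsto_const_nhds h2
    rw [sub_self] at h3
    refine h3.congr' ?_
    filter_upwards [eventually_ge_atTop (0:ℝ)] with a ha
    have hun : Set.Ioc 0 a ∪ Set.Ioi a = Set.Ioi (0:ℝ) := Set.Ioc_union_Ioi_eq_Ioi ha
    rw [← hun, setIntegral_union (Set.Ioc_disjoint_Ioi le_rfl) measurableSet_Ioi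
      (hxψIoc a) (hint2.mono_set (Set.Ioi_subset_Ioi ha))]
    ring
  have hEnonneg : ∀ τ : ℝ, 0 ≤ E τ := by
    intro τ
    exact setIntegral_nonneg measurableSet_Ioc fun x hx => by nlinarith [hpos x hx.1.le, sq_nonneg x, hx.1.le]
  have hE0 : Tendsto (fun τ : ℝ => τ * E τ) (𝓝[>] (0:ℝ)) (𝓝 0) := by
    rw [Metric.tendsto_nhdsWithin_nhds]
    intro ε hε
    obtain ⟨A₀, hA₀⟩ := ((eventually_ge_atTop (1:ℝ)).and
      (hTtend.eventually_lt_const (by linarith : (0:ℝ) < ε/2))).exists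
    obtain ⟨hA₀1, hA₀2⟩ := hA₀
    have hA₀pos : 0 < A₀ := by linarith
    set M' : ℝ := ∫ x in Set.Ioc (0:ℝ) A₀, x * ψ x with hM'
    have hM'nn : 0 ≤ M' := setIntegral_nonneg measurableSet_Ioc
      fun x hx => mul_nonneg hx.1.le (hpos x hx.1.le)
    refine ⟨min (1/A₀) (ε/(2*(A₀*M'+1))), by positivity, ?_⟩
    intro τ hτmem hτd
    have hτ : 0 < τ := hτmem
    rw [Real.dist_eq, sub_zero, abs_of_pos hτ] at hτd
    have hτ1 : τ < 1/A₀ := lt_of_lt_of_le hτd (min_le_left _ _)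
    have hτ2 : τ < ε/(2*(A₀*M'+1)) := lt_of_lt_of_le hτd (min_le_right _ _)
    have h1τ : 0 < 1/τ := one_div_pos.mpr hτ
    have hA₀le : A₀ ≤ 1/τ := by
      rw [lt_div_iff₀ hA₀pos] at hτ1
      rw [le_div_iff₀ hτ]
      nlinarith
    -- split the integral
    have hsplit : E τ = (∫ x in Set.Ioc (0:ℝ) A₀, x^2 * ψ x)
        + ∫ x in Set.Ioc A₀ (1/τ), x^2 * ψ x := by
      simp only [hEdef]
      have hun : Set.Ioc (0:ℝ) A₀ ∪ Set.Ioc A₀ (1/τ) = Set.Ioc (0:ℝ) (1/τ) :=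
        Set.Ioc_union_Ioc_eq_Ioc hA₀pos.le hA₀le
      rw [← hun, setIntegral_union (Set.Ioc_disjoint_Ioc_of_le le_rfl) measurableSet_Ioc
        ((hx2ψIoc (1/τ) h1τ).mono_set (Set.Ioc_subset_Ioc_right hA₀le))
        ((hx2ψIoc (1/τ) h1τ).mono_set (Set.Ioc_subset_Ioc_left hA₀pos.le))]
    have hbd1 : (∫ x in Set.Ioc (0:ℝ) A₀, x^2 * ψ x) ≤ A₀ * M' := by
      have := setIntegral_mono_on
        ((hx2ψIoc (1/τ) h1τ).mono_set (Set.Ioc_subset_Ioc_right hA₀le))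
        ((hxψIoc A₀).const_mul A₀) measurableSet_Ioc
        (fun x hx => by nlinarith [hpos x hx.1.le, hx.1, hx.2,
          mul_le_mul_of_nonneg_right hx.2 (mul_nonneg hx.1.le (hpos x hx.1.le))])
      calc (∫ x in Set.Ioc (0:ℝ) A₀, x^2 * ψ x) ≤ ∫ x in Set.Ioc (0:ℝ) A₀, A₀ * (x * ψ x) := this
        _ = A₀ * M' := by rw [integral_const_mul, hM']
    have hbd2 : (∫ x in Set.Ioc A₀ (1/τ), x^2 * ψ x) ≤ (1/τ) * ∫ x in Set.Ioi A₀, x * ψ x := by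
      have hs1 : (∫ x in Set.Ioc A₀ (1/τ), x^2 * ψ x) ≤ ∫ x in Set.Ioc A₀ (1/τ), (1/τ) * (x * ψ x) := by
        refine setIntegral_mono_on
          ((hx2ψIoc (1/τ) h1τ).mono_set (Set.Ioc_subset_Ioc_left hA₀pos.le))
          (((hxψIoc (1/τ)).mono_set (Set.Ioc_subset_Ioc_left hA₀pos.le)).const_mul (1/τ))
          measurableSet_Ioc ?_
        intro x hx
        have hx0 : 0 < x := lt_trans hA₀pos hx.1
        nlinarith [hpos x hx0.le, hx.2, hx0,
          mul_le_mul_of_nonneg_right hx.2 (mul_nonneg hx0.le (hpos x hx0.le))]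
      have hs2 : (∫ x in Set.Ioc A₀ (1/τ), x * ψ x) ≤ ∫ x in Set.Ioi A₀, x * ψ x := by
        refine setIntegral_mono_set (hint2.mono_set (Set.Ioi_subset_Ioi hA₀pos.le)) ?_ ?_
        · rw [EventuallyLE, ae_restrict_iff' measurableSet_Ioi]
          filter_upwards with x hx
          have hx0 : 0 < x := lt_trans hA₀pos hx
          exact mul_nonneg hx0.le (hpos x hx0.le)
        · exact HasSubset.Subset.eventuallyLE Set.Ioc_subset_Ioi_self
      calc (∫ x in Set.Ioc A₀ (1/τ), x^2 * ψ x) ≤ ∫ x in Set.Ioc A₀ (1/τ), (1/τ) * (x * ψ x) := hs1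
        _ = (1/τ) * ∫ x in Set.Ioc A₀ (1/τ), x * ψ x := integral_const_mul _ _
        _ ≤ (1/τ) * ∫ x in Set.Ioi A₀, x * ψ x := mul_le_mul_of_nonneg_left hs2 h1τ.le
    rw [Real.dist_eq, sub_zero, abs_of_nonneg (mul_nonneg hτ.le (hEnonneg τ))]
    have hτinv : τ * (1/τ) = 1 := by field_simp
    calc τ * E τ = τ * ((∫ x in Set.Ioc (0:ℝ) A₀, x^2 * ψ x)
          + ∫ x in Set.Ioc A₀ (1/τ), x^2 * ψ x) := by rw [hsplit]
      _ ≤ τ * (A₀ * M' + (1/τ) * ∫ x in Set.Ioi A₀, x * ψ x) := by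
          apply mul_le_mul_of_nonneg_left (add_le_add hbd1 hbd2) hτ.le
      _ = τ * (A₀ * M') + (τ * (1/τ)) * ∫ x in Set.Ioi A₀, x * ψ x := by ring
      _ = τ * (A₀ * M') + ∫ x in Set.Ioi A₀, x * ψ x := by rw [hτinv, one_mul]
      _ < ε/2 + ε/2 := by
          apply add_lt_add_of_le_of_lt _ hA₀2
          have hpos2 : (0:ℝ) < 2*(A₀*M'+1) := by nlinarith [mul_nonneg hA₀pos.le hM'nn]
          have h9 : τ*(2*(A₀*M'+1)) < ε := by
            rw [lt_div_iff₀ hpos2] at hτ2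
            linarith
          nlinarith [h9, hτ, mul_nonneg hτ.le (mul_nonneg hA₀pos.le hM'nn)]
      _ = ε := by ring
  -- substitution identity
  have hsub : ∀ τ : ℝ, 0 < τ →
      ((2 * Real.pi / τ) *
        ∫ μ in Set.Icc (-1 : ℝ) 1,
          (ψ ((1 - μ) / (2 * τ)) *
            (4 * Real.pi * τ * ∫ x in Set.Ioc (0 : ℝ) (1 / τ), ψ x)⁻¹) * (1 - legendreP l μ))
      = (τ * I τ)⁻¹ * ∫ u in Set.Ioc (0:ℝ) (1/τ), ψ u * (1 - legendreP l (1 - 2*(τ*u))) := by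
    intro τ hτ
    have hτne : τ ≠ 0 := hτ.ne'
    have h1τ : (0:ℝ) < 1/τ := one_div_pos.mpr hτ
    set G : ℝ → ℝ := fun u => ψ u * (1 - legendreP l (1 - 2*(τ*u))) with hG
    have h2τ : (2:ℝ)*τ ≠ 0 := mul_ne_zero two_ne_zero hτne
    have hcne : (-(1/(2*τ)) : ℝ) ≠ 0 := neg_ne_zero.mpr (one_div_ne_zero h2τ)
    have hptw : ∀ μ : ℝ, (ψ ((1 - μ) / (2 * τ)) *
        (4 * Real.pi * τ * ∫ x in Set.Ioc (0 : ℝ) (1 / τ), ψ x)⁻¹) * (1 - legendreP l μ)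
        = (4 * Real.pi * τ * I τ)⁻¹ * G (-(1/(2*τ))*μ + 1/(2*τ)) := by
      intro μ
      have e2 : 1 - 2*(τ*(-(1/(2*τ))*μ + 1/(2*τ))) = μ := by field_simp; ring
      have e1 : -(1/(2*τ))*μ + 1/(2*τ) = (1-μ)/(2*τ) := by field_simp; ring
      rw [hG]
      simp only []
      rw [e2, e1, hIdef]
      ring
    have hcongr : (∫ μ in Set.Icc (-1 : ℝ) 1,
        (ψ ((1 - μ) / (2 * τ)) *
          (4 * Real.pi * τ * ∫ x in Set.Ioc (0 : ℝ) (1 / τ), ψ x)⁻¹) * (1 - legendreP l μ))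
        = ∫ μ in Set.Icc (-1 : ℝ) 1, (4 * Real.pi * τ * I τ)⁻¹ * G (-(1/(2*τ))*μ + 1/(2*τ)) := by
      apply integral_congr_ae
      filter_upwards with μ
      exact hptw μ
    rw [hcongr, integral_const_mul]
    have hIcc : (∫ μ in Set.Icc (-1 : ℝ) 1, G (-(1/(2*τ))*μ + 1/(2*τ)))
        = 2*τ * ∫ u in Set.Ioc (0:ℝ) (1/τ), G u := by
      rw [integral_Icc_eq_integral_Ioc,
        ← intervalIntegral.integral_of_le (by norm_num : (-1:ℝ) ≤ 1),
        intervalIntegral.integral_comp_mul_add G hcne (1/(2*τ))]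
      have ee1 : -(1/(2*τ))*(-1) + 1/(2*τ) = 1/τ := by field_simp; norm_num
      have ee2 : -(1/(2*τ))*1 + 1/(2*τ) = (0:ℝ) := by ring
      have hcinv : (-(1/(2*τ)) : ℝ)⁻¹ = -(2*τ) := by
        rw [inv_neg, one_div, inv_inv]
      rw [ee1, ee2, intervalIntegral.integral_symm, hcinv,
        intervalIntegral.integral_of_le h1τ.le]
      simp only [smul_eq_mul, smul_neg, neg_neg, neg_mul, mul_neg]
    rw [hIcc]
    rcases eq_or_ne (I τ) 0 with h0 | h0
    · simp [h0]
    · have hπ : Real.pi ≠ 0 := Real.pi_ne_zero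
      field_simp
      ring
  -- assembly
  have hIA2 : ∀ᶠ τ in 𝓝[>] (0:ℝ), A/2 < I τ := hItend.eventually_const_lt (by linarith)
  have hr0 : Tendsto (fun τ : ℝ => (τ * I τ)⁻¹ *
      ((∫ u in Set.Ioc (0:ℝ) (1/τ), ψ u * (1 - legendreP l (1 - 2*(τ*u)))) - cl * τ * J τ))
      (𝓝[>] (0:ℝ)) (𝓝 0) := by
    have hg : Tendsto (fun τ : ℝ => (2*Kc l/A) * (τ * E τ)) (𝓝[>] (0:ℝ)) (𝓝 0) := by
      have := hE0.const_mul (2*Kc l/A)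
      simpa using this
    refine squeeze_zero_norm' ?_ hg
    filter_upwards [self_mem_nhdsWithin, hIA2] with τ hτ' hIτ
    have hτ : (0:ℝ) < τ := hτ'
    have hIτpos : 0 < I τ := lt_trans (by linarith) hIτ
    have hDb := hkey τ hτ
    rw [Real.norm_eq_abs, abs_mul, abs_inv, abs_of_pos (mul_pos hτ hIτpos)]
    have step1 : (τ * I τ)⁻¹ *
        |(∫ u in Set.Ioc (0:ℝ) (1/τ), ψ u * (1 - legendreP l (1 - 2*(τ*u)))) - cl * τ * J τ|
        ≤ (τ * I τ)⁻¹ * (Kc l * τ^2 * E τ) :=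
      mul_le_mul_of_nonneg_left hDb (inv_nonneg.mpr (mul_pos hτ hIτpos).le)
    have heqr : (τ * I τ)⁻¹ * (Kc l * τ^2 * E τ) = (Kc l * (τ * E τ)) * (I τ)⁻¹ := by
      rw [mul_inv]
      field_simp
    have hIle : (I τ)⁻¹ ≤ 2/A := by
      have h1 : (I τ)⁻¹ < (A/2)⁻¹ := by
        apply inv_strictAnti₀ (by linarith) hIτ
      rw [inv_div] at h1
      linarith
    have hnn : 0 ≤ Kc l * (τ * E τ) :=
      mul_nonneg (Kc_nonneg l) (mul_nonneg hτ.le (hEnonneg τ))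
    calc (τ * I τ)⁻¹ *
        |(∫ u in Set.Ioc (0:ℝ) (1/τ), ψ u * (1 - legendreP l (1 - 2*(τ*u)))) - cl * τ * J τ|
        ≤ (τ * I τ)⁻¹ * (Kc l * τ^2 * E τ) := step1
      _ = (Kc l * (τ * E τ)) * (I τ)⁻¹ := heqr
      _ ≤ (Kc l * (τ * E τ)) * (2/A) := mul_le_mul_of_nonneg_left hIle hnn
      _ = (2*Kc l/A) * (τ * E τ) := by ring
  have hfin : Tendsto (fun τ : ℝ => cl * (J τ / I τ) + (τ * I τ)⁻¹ *
      ((∫ u in Set.Ioc (0:ℝ) (1/τ), ψ u * (1 - legendreP l (1 - 2*(τ*u)))) - cl * τ * J τ))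
      (𝓝[>] (0:ℝ)) (𝓝 (cl * (A/A) + 0)) :=
    (tendsto_const_nhds.mul (hJtend.div hItend hIpos.ne')).add hr0
  rw [div_self hIpos.ne', mul_one, add_zero] at hfin
  refine Tendsto.congr' ?_ hfin
  filter_upwards [self_mem_nhdsWithin] with τ hτ'
  have hτ : (0:ℝ) < τ := hτ'
  rw [hsub τ hτ]
  rcases eq_or_ne (I τ) 0 with h0 | h0
  · simp [h0]
  · field_simp
    ring
end
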